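/- Let 𝒢 = (H_1, H_1, H_2, H_2, ..., H_{T/2}, H_{T/2}) be a temporal graph with each snapshot duplicated, where every H_i has maximum degree at most Δ. Then 𝒢 admits a temporal (3Δ+1)-coloring. -/

import Mathlib

open SimpleGraph

/-- A coloring is proper for a graph if adjacent vertices get different colors. -/
def ProperColoring {V α : Type*} (H : SimpleGraph V) (c : V → α) : Prop :=
  ∀ u v, H.Adj u v → c u ≠ c v

/-- Two colorings are compatible for two consecutive snapshots if, for every edge of
either snapshot, the first coloring of one endpoint differs from the second coloring
of the other endpoint. -/
def Compatible {V α : Type*} (G G' : SimpleGraph V) (c c' : V → α) : Prop :=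
  ∀ u v, (G ⊔ G').Adj u v → c u ≠ c' v

/-- The union of the snapshots at times `i-1`, `i`, `i+1` (those that exist, with
snapshots indexed by `1,…,T`). -/
def Smash {V : Type*} (G : ℕ → SimpleGraph V) (T i : ℕ) : SimpleGraph V :=
  (if 2 ≤ i then G (i - 1) else ⊥) ⊔ G i ⊔ (if i < T then G (i + 1) else ⊥)

/-- A temporal coloring of a temporal graph with snapshots `G 1, …, G T`. -/
def TemporalColoring {V α : Type*} (T : ℕ) (G : ℕ → SimpleGraph V) (c : ℕ → V → α) : Prop :=
  (∀ i, 1 ≤ i → i ≤ T → ProperColoring (Smash G T i) (c i)) ∧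
  (∀ i, 1 ≤ i → i < T → Compatible (G i) (G (i + 1)) (c i) (c (i + 1)))

/-- The temporal chromatic number: the least `k` admitting a temporal `k`-coloring. -/
noncomputable def temporalChromaticNumber {V : Type*} (T : ℕ) (G : ℕ → SimpleGraph V) : ℕ :=
  sInf {k | ∃ c : ℕ → V → Fin k, TemporalColoring T G c}

/-- A graph is `d`-degenerate if every nonempty (finite) subgraph has a vertex of
degree at most `d`. -/
def Degenerate {V : Type*} (H : SimpleGraph V) (d : ℕ) : Prop :=
  ∀ s : Finset V, s.Nonempty → ∃ v ∈ s, ({u | u ∈ s ∧ H.Adj v u} : Set V).ncard ≤ d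

/-- A graph is `Δ`-bounded if every vertex has degree at most `Δ`. -/
def DegLE {V : Type*} (H : SimpleGraph V) (Δ : ℕ) : Prop :=
  ∀ v, (H.neighborSet v).ncard ≤ Δ

/-- If each snapshot is duplicated (`G (2i-1) = G (2i) = H i`) and every `H i` has
maximum degree at most `Δ`, then the temporal graph admits a temporal
`(3Δ+1)`-coloring. -/
lemma exists_greedy {V : Type*} [Fintype V] {k D e : ℕ}
    (A : SimpleGraph V) (F : V → Finset (Fin k))
    (hdeg : ∀ v, (A.neighborSet v).ncard ≤ D)
    (hF : ∀ v, (F v).card ≤ e) (hk : D + e < k) :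
    ∃ c : V → Fin k, ProperColoring A c ∧ ∀ v, c v ∉ F v := by
  classical
  obtain ⟨n, ⟨ι⟩⟩ : ∃ n, Nonempty (V ≃ Fin n) := ⟨_, ⟨Fintype.equivFin V⟩⟩
  suffices h : ∀ i : ℕ, ∃ c : V → Fin k,
      (∀ u v : V, (ι v : ℕ) < i → (ι u : ℕ) < (ι v : ℕ) → A.Adj u v → c u ≠ c v) ∧
      (∀ v : V, (ι v : ℕ) < i → c v ∉ F v) by
    obtain ⟨c, h1, h2⟩ := h n
    refine ⟨c, ?_, fun v => h2 v (ι v).2⟩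
    intro u v huv
    rcases lt_trichotomy (ι u : ℕ) (ι v : ℕ) with h | h | h
    · exact h1 u v (ι v).2 h huv
    · exact absurd (ι.injective (Fin.ext h)) (A.ne_of_adj huv)
    · exact fun heq => (h1 v u (ι u).2 h huv.symm) heq.symm
  intro i
  induction i with
  | zero => exact ⟨fun _ => ⟨0, by omega⟩, fun u v hv => by omega, fun v hv => by omega⟩
  | succ i ih =>
    obtain ⟨c, h1, h2⟩ := ih
    by_cases hi : i < n
    · set v : V := ι.symm ⟨i, hi⟩ with hv
      have hιv : (ι v : ℕ) = i := by simp [hv]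
      set forb : Finset (Fin k) :=
        F v ∪ ((Set.toFinite (A.neighborSet v)).toFinset.filter
          (fun u => (ι u : ℕ) < i)).image c with hforb
      have hcard : forb.card < k := by
        calc forb.card ≤ (F v).card + _ := Finset.card_union_le _ _
        _ ≤ e + ((Set.toFinite (A.neighborSet v)).toFinset.filter
              (fun u => (ι u : ℕ) < i)).card :=
            add_le_add (hF v) (Finset.card_image_le)
        _ ≤ e + (Set.toFinite (A.neighborSet v)).toFinset.card :=
            Nat.add_le_add_left (Finset.card_filter_le _ _) e
        _ = e + (A.neighborSet v).ncard := by
            rw [Set.ncard_eq_toFinset_card _ (Set.toFinite _)]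
        _ ≤ e + D := Nat.add_le_add_left (hdeg v) e
        _ < k := by omega
      have hne : (Finset.univ \ forb).Nonempty := by
        rw [Finset.sdiff_nonempty]
        intro hsub
        have := Finset.card_le_card hsub
        simp only [Finset.card_univ, Fintype.card_fin] at this
        omega
      obtain ⟨a, ha⟩ := hne
      rw [Finset.mem_sdiff] at ha
      have hanf : a ∉ forb := ha.2
      refine ⟨Function.update c v a, ?_, ?_⟩
      · intro u w hw huw hadj
        have hwi : (ι w : ℕ) < i ∨ (ι w : ℕ) = i := by omega
        rcases hwi with hw' | hw'
        · have hwv : w ≠ v := fun h => by rw [h, hιv] at hw'; omega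
          have huv : u ≠ v := fun h => by rw [h, hιv] at huw; omega
          rw [Function.update_of_ne huv, Function.update_of_ne hwv]
          exact h1 u w hw' huw hadj
        · have hwv : w = v := by
            apply ι.injective; apply Fin.ext; rw [hιv, hw']
          have huv : u ≠ v := fun h => by rw [h, hιv] at huw; omega
          rw [hwv, Function.update_of_ne huv, Function.update_self]
          intro hcontra
          apply hanf
          rw [hforb]
          apply Finset.mem_union_right
          apply Finset.mem_image.mpr
          refine ⟨u, ?_, hcontra⟩
          rw [Finset.mem_filter, Set.Finite.mem_toFinset]
          rw [hwv] at hadj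
          refine ⟨hadj.symm, ?_⟩
          rw [hwv, hιv] at huw
          exact huw
      · intro w hw
        have hwi : (ι w : ℕ) < i ∨ (ι w : ℕ) = i := by omega
        rcases hwi with hw' | hw'
        · have hwv : w ≠ v := fun h => by rw [h, hιv] at hw'; omega
          rw [Function.update_of_ne hwv]
          exact h2 w hw'
        · have hwv : w = v := by
            apply ι.injective; apply Fin.ext; rw [hιv, hw']
          rw [hwv, Function.update_self]
          intro hcontra
          exact hanf (Finset.mem_union_left _ hcontra)
    · refine ⟨c, fun u w hw huw hadj => h1 u w ?_ huw hadj, fun w hw => h2 w ?_⟩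
      · have := (ι w).2; omega
      · have := (ι w).2; omega

lemma degle_sup {V : Type*} {Δ : ℕ} (A B : SimpleGraph V)
    (hA : DegLE A Δ) (hB : DegLE B Δ) :
    ∀ v, ((A ⊔ B).neighborSet v).ncard ≤ 2 * Δ := by
  intro v
  have h : (A ⊔ B).neighborSet v = A.neighborSet v ∪ B.neighborSet v := by
    ext u; simp [SimpleGraph.mem_neighborSet, SimpleGraph.sup_adj]
  rw [h, two_mul]
  exact le_trans (Set.ncard_union_le _ _) (add_le_add (hA v) (hB v))

lemma imagecard_le {V : Type*} [Fintype V] {Δ : ℕ} (B : SimpleGraph V) (hB : DegLE B Δ)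
    {k : ℕ} (d : V → Fin k) (v : V) :
    ((Set.toFinite (B.neighborSet v)).toFinset.image d).card ≤ Δ := by
  calc ((Set.toFinite (B.neighborSet v)).toFinset.image d).card
      ≤ (Set.toFinite (B.neighborSet v)).toFinset.card := Finset.card_image_le
    _ = (B.neighborSet v).ncard := by rw [Set.ncard_eq_toFinset_card _ (Set.toFinite _)]
    _ ≤ Δ := hB v

noncomputable def dseq {V : Type*} [Fintype V] (Δ : ℕ) (H : ℕ → SimpleGraph V)
    (hH : ∀ i, DegLE (H i) Δ) : ℕ → V → Fin (3 * Δ + 1)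
  | 0 => (exists_greedy (H 0 ⊔ H 1) (fun _ => (∅ : Finset (Fin (3 * Δ + 1))))
      (degle_sup _ _ (hH 0) (hH 1)) (fun _ => by simp)
      (by omega : 2 * Δ + 0 < 3 * Δ + 1)).choose
  | j + 1 => (exists_greedy (H (j + 1) ⊔ H (j + 2))
      (fun v => (Set.toFinite ((H (j + 1)).neighborSet v)).toFinset.image (dseq Δ H hH j))
      (degle_sup _ _ (hH (j + 1)) (hH (j + 2)))
      (fun v => imagecard_le _ (hH (j + 1)) _ v)
      (by omega : 2 * Δ + Δ < 3 * Δ + 1)).choose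

lemma dseq_proper {V : Type*} [Fintype V] (Δ : ℕ) (H : ℕ → SimpleGraph V)
    (hH : ∀ i, DegLE (H i) Δ) (j : ℕ) :
    ProperColoring (H j ⊔ H (j + 1)) (dseq Δ H hH j) := by
  cases j with
  | zero => exact (exists_greedy (H 0 ⊔ H 1) (fun _ => (∅ : Finset (Fin (3 * Δ + 1))))
      (degle_sup _ _ (hH 0) (hH 1)) (fun _ => by simp)
      (by omega : 2 * Δ + 0 < 3 * Δ + 1)).choose_spec.1
  | succ j => exact (exists_greedy (H (j + 1) ⊔ H (j + 2))
      (fun v => (Set.toFinite ((H (j + 1)).neighborSet v)).toFinset.image (dseq Δ H hH j))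
      (degle_sup _ _ (hH (j + 1)) (hH (j + 2)))
      (fun v => imagecard_le _ (hH (j + 1)) _ v)
      (by omega : 2 * Δ + Δ < 3 * Δ + 1)).choose_spec.1

lemma dseq_compat {V : Type*} [Fintype V] (Δ : ℕ) (H : ℕ → SimpleGraph V)
    (hH : ∀ i, DegLE (H i) Δ) (j : ℕ) :
    ∀ u v, (H (j + 1)).Adj u v → dseq Δ H hH j u ≠ dseq Δ H hH (j + 1) v := by
  intro u v hadj heq
  have hspec := (exists_greedy (H (j + 1) ⊔ H (j + 2))
      (fun v => (Set.toFinite ((H (j + 1)).neighborSet v)).toFinset.image (dseq Δ H hH j))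
      (degle_sup _ _ (hH (j + 1)) (hH (j + 2)))
      (fun v => imagecard_le _ (hH (j + 1)) _ v)
      (by omega : 2 * Δ + Δ < 3 * Δ + 1)).choose_spec.2 v
  apply hspec
  apply Finset.mem_image.mpr
  exact ⟨u, by rw [Set.Finite.mem_toFinset]; exact hadj.symm, heq⟩

lemma properColoring_mono {V α : Type*} {A B : SimpleGraph V} {c : V → α}
    (h : A ≤ B) (hB : ProperColoring B c) : ProperColoring A c :=
  fun u v huv => hB u v (h huv)

lemma smash_le {V : Type*} (H : ℕ → SimpleGraph V) (T i : ℕ) :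
    Smash (fun j => H ((j + 1) / 2)) T i ≤ H (i / 2) ⊔ H (i / 2 + 1) := by
  unfold Smash
  refine sup_le (sup_le ?_ ?_) ?_
  · split_ifs with h
    · have he : (i - 1 + 1) / 2 = i / 2 := by omega
      simp only [he]
      exact le_sup_left
    · exact bot_le
  · have he : (i + 1) / 2 = i / 2 ∨ (i + 1) / 2 = i / 2 + 1 := by omega
    rcases he with h | h <;> simp only [h]
    · exact le_sup_left
    · exact le_sup_right
  · split_ifs with h
    · have he : (i + 1 + 1) / 2 = i / 2 + 1 := by omega
      simp only [he]
      exact le_sup_right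
    · exact bot_le

theorem statement15 {V : Type*} [Fintype V] (Δ m : ℕ) (H : ℕ → SimpleGraph V)
    (hH : ∀ i, DegLE (H i) Δ) :
    ∃ c : ℕ → V → Fin (3 * Δ + 1),
      TemporalColoring (2 * m) (fun j => H ((j + 1) / 2)) c := by
  refine ⟨fun i => dseq Δ H hH (i / 2), ?_, ?_⟩
  · intro i _ _
    exact properColoring_mono (smash_le H (2 * m) i) (dseq_proper Δ H hH (i / 2))
  · intro i hi1 hi2 u v huv heq
    simp only [SimpleGraph.sup_adj] at huv
    rcases Nat.even_or_odd i with ⟨j, hj⟩ | ⟨j, hj⟩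
    · -- i = 2j even, j ≥ 1
      have h1 : i / 2 = j := by omega
      have h2 : (i + 1) / 2 = j := by omega
      have h3 : (i + 1 + 1) / 2 = j + 1 := by omega
      simp only [h1, h2] at heq
      have hadj : (H j ⊔ H (j + 1)).Adj u v := by
        rw [SimpleGraph.sup_adj]
        rcases huv with h | h
        · left; rwa [h2] at h
        · right; rwa [h3] at h
      exact dseq_proper Δ H hH j u v hadj heq
    · -- i = 2j+1 odd
      have h1 : i / 2 = j := by omega
      have h2 : (i + 1) / 2 = j + 1 := by omega
      have h3 : (i + 1 + 1) / 2 = j + 1 := by omega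
      simp only [h1, h2] at heq
      have hadj : (H (j + 1)).Adj u v := by
        rcases huv with h | h
        · rwa [h2] at h
        · rwa [h3] at h
      exact dseq_compat Δ H hH j u v hadj heq
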